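/- Let S be a finite nonempty index set and for each v ∈ S let n_v be a positive integer. Let Σ : ⊕_{v∈S} (1/n_v)ℤ/ℤ → ℚ/ℤ be the homomorphism from the direct sum of the n_v-torsion subgroups of ℚ/ℤ to ℚ/ℤ defined by Σ((x_v)_v) = Σ_{v∈S} x_v. Then the kernel of Σ is a finite group whose order equals (∏_{v∈S} n_v) / lcm_{v∈S}(n_v). -/

import Mathlib

open AddSubgroup

abbrev QZ := ℚ ⧸ AddSubgroup.zmultiples (1 : ℚ)

lemma qz_coe_nsmul (m : ℕ) (q : ℚ) : ((m • q : ℚ) : QZ) = m • (q : QZ) := rfl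

lemma qz_coe_zsmul (m : ℤ) (q : ℚ) : ((m • q : ℚ) : QZ) = m • (q : QZ) := rfl

lemma qz_coe_add (q r : ℚ) : ((q + r : ℚ) : QZ) = (q : QZ) + (r : QZ) := rfl

lemma qz_coe_int (k : ℤ) : ((k : ℚ) : QZ) = 0 := by
  rw [QuotientAddGroup.eq_zero_iff]
  exact ⟨k, by simp⟩

lemma mem_tor {m : ℕ} (hm : 0 < m) (x : QZ) :
    x ∈ zmultiples ((((m : ℚ)⁻¹ : ℚ) : QZ)) ↔ m • x = 0 := by
  constructor
  · rintro ⟨k, rfl⟩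
    have h1 : m • ((((m : ℚ)⁻¹ : ℚ) : QZ)) = 0 := by
      rw [← qz_coe_nsmul, nsmul_eq_mul,
        mul_inv_cancel₀ (by exact_mod_cast hm.ne' : ((m : ℚ) ≠ 0))]
      exact (QuotientAddGroup.eq_zero_iff _).2 ⟨1, by simp⟩
    show m • (k • ((((m : ℚ)⁻¹ : ℚ) : QZ))) = 0
    rw [smul_comm, h1, smul_zero]
  · induction x using QuotientAddGroup.induction_on with
    | H q =>
      intro h
      rw [← qz_coe_nsmul, QuotientAddGroup.eq_zero_iff] at h
      obtain ⟨k, hk⟩ := h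
      refine ⟨k, ?_⟩
      show k • ((((m : ℚ)⁻¹ : ℚ) : QZ)) = (q : QZ)
      rw [← qz_coe_zsmul]
      congr 1
      have hm' : ((m : ℚ)) ≠ 0 := by exact_mod_cast hm.ne'
      simp only [zsmul_eq_mul, smul_eq_mul, nsmul_eq_mul, mul_one] at hk
      rw [zsmul_eq_mul, hk]
      field_simp

lemma card_tor (m : ℕ) (hm : 0 < m) :
    Nat.card (zmultiples ((((m : ℚ)⁻¹ : ℚ) : QZ))) = m := by
  haveI : Fact ((0 : ℚ) < 1) := ⟨one_pos⟩
  rw [Nat.card_zmultiples]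
  have := AddCircle.addOrderOf_period_div (p := (1 : ℚ)) hm
  rwa [one_div] at this

lemma inv_lcm_mem {a b : ℕ} (S : AddSubgroup QZ) (ha : 0 < a) (hb : 0 < b)
    (hA : (((a : ℚ)⁻¹ : ℚ) : QZ) ∈ S) (hB : (((b : ℚ)⁻¹ : ℚ) : QZ) ∈ S) :
    ((((Nat.lcm a b : ℕ) : ℚ)⁻¹ : ℚ) : QZ) ∈ S := by
  have key : (((Nat.lcm a b : ℕ) : ℚ))⁻¹
      = (Nat.gcdB a b) • ((a : ℚ)⁻¹) + (Nat.gcdA a b) • ((b : ℚ)⁻¹) := by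
    have hg := Nat.gcd_eq_gcd_ab a b
    have hmul : (Nat.gcd a b : ℚ) * (Nat.lcm a b : ℚ) = (a : ℚ) * b := by
      exact_mod_cast congrArg (Nat.cast : ℕ → ℚ) (Nat.gcd_mul_lcm a b)
    have ha' : (a : ℚ) ≠ 0 := by exact_mod_cast ha.ne'
    have hb' : (b : ℚ) ≠ 0 := by exact_mod_cast hb.ne'
    have hl' : ((Nat.lcm a b : ℕ) : ℚ) ≠ 0 := by
      exact_mod_cast (Nat.pos_of_ne_zero (by
        simp [Nat.lcm_ne_zero ha.ne' hb.ne'])).ne'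
    have hg' : (Nat.gcd a b : ℚ) = (a : ℚ) * (Nat.gcdA a b : ℚ) + (b : ℚ) * (Nat.gcdB a b : ℚ) := by
      exact_mod_cast congrArg (Int.cast : ℤ → ℚ) hg
    simp only [zsmul_eq_mul]
    field_simp
    nlinarith [hmul, hg']
  rw [key, qz_coe_add, qz_coe_zsmul, qz_coe_zsmul]
  exact S.add_mem (S.zsmul_mem hA _) (S.zsmul_mem hB _)

lemma inv_lcm_finset_mem {ι : Type*} [DecidableEq ι] (S : AddSubgroup QZ) (s : Finset ι)
    (n : ι → ℕ) (hn : ∀ v ∈ s, 0 < n v)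
    (h : ∀ v ∈ s, ((((n v : ℕ) : ℚ)⁻¹ : ℚ) : QZ) ∈ S) :
    ((((s.lcm n : ℕ) : ℚ)⁻¹ : ℚ) : QZ) ∈ S := by
  induction s using Finset.induction_on with
  | empty =>
      have h1 : (((Finset.lcm ∅ n : ℕ) : ℚ)⁻¹ : ℚ) = 1 := by simp
      rw [h1]
      have h2 : ((1 : ℚ) : QZ) = 0 := (QuotientAddGroup.eq_zero_iff _).2 ⟨1, by simp⟩
      rw [h2]
      exact S.zero_mem
  | @insert a s ha ih =>
      have hs : 0 < s.lcm n := by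
        refine Nat.pos_of_ne_zero fun h0 => ?_
        obtain ⟨v, hv, hv0⟩ := Finset.lcm_eq_zero_iff.1 h0
        exact (hn v (Finset.mem_insert_of_mem hv)).ne' hv0
      have hins : (insert a s).lcm n = Nat.lcm (n a) (s.lcm n) := by
        rw [Finset.lcm_insert, lcm_eq_nat_lcm]
      rw [hins]
      exact inv_lcm_mem S (hn a (Finset.mem_insert_self a s)) hs
        (h a (Finset.mem_insert_self a s))
        (ih (fun v hv => hn v (Finset.mem_insert_of_mem hv))
            (fun v hv => h v (Finset.mem_insert_of_mem hv)))

/-- Let `S` be a finite nonempty index set and, for each `v ∈ S`,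
let `n v` be a positive integer.  Let `T v` be the `n v`-torsion subgroup
`(1/n v)ℤ/ℤ` of `ℚ/ℤ`, and let `σ : ⨁_{v ∈ S} T v → ℚ/ℤ` be the summation map
`σ (x_v)_v = ∑_v x_v`.  Then the kernel of `σ` is a finite group of order
`(∏_v n v) / lcm_v (n v)`. -/
theorem card_ker_sum_torsion {S : Type*} [Fintype S] [DecidableEq S] [Nonempty S]
    (n : S → ℕ) (hn : ∀ v, 0 < n v)
    (T : S → AddSubgroup (ℚ ⧸ AddSubgroup.zmultiples (1 : ℚ)))
    (hT : ∀ v x, x ∈ T v ↔ n v • x = 0)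
    (σ : DirectSum S (fun v => ↥(T v)) →+ ℚ ⧸ AddSubgroup.zmultiples (1 : ℚ))
    (hσ : ∀ x : DirectSum S (fun v => ↥(T v)), σ x = ∑ v, ((x v : ↥(T v)) : ℚ ⧸ AddSubgroup.zmultiples (1 : ℚ))) :
    Finite σ.ker ∧ Nat.card σ.ker = (∏ v, n v) / Finset.univ.lcm n := by
  classical
  set L := Finset.univ.lcm n with hLdef
  have hL0 : 0 < L := by
    refine Nat.pos_of_ne_zero fun h0 => ?_
    obtain ⟨v, _, hv0⟩ := Finset.lcm_eq_zero_iff.1 h0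
    exact (hn v).ne' hv0
  have hTv : ∀ v, T v = zmultiples ((((n v : ℚ)⁻¹ : ℚ) : QZ)) := fun v => by
    ext x; rw [hT v x, ← mem_tor (hn v)]
  have hcard : ∀ v, Nat.card (T v) = n v := fun v => by
    rw [hTv v]; exact card_tor _ (hn v)
  haveI hfin : ∀ v, Finite (T v) := fun v =>
    Nat.finite_of_card_ne_zero (by rw [hcard v]; exact (hn v).ne')
  haveI : Finite (DirectSum S fun v => ↥(T v)) :=
    Finite.of_equiv _ (DirectSum.addEquivProd fun v => ↥(T v)).symm.toEquiv
  have hdom : Nat.card (DirectSum S fun v => ↥(T v)) = ∏ v, n v := by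
    rw [Nat.card_congr (DirectSum.addEquivProd fun v => ↥(T v)).toEquiv, Nat.card_pi]
    exact Finset.prod_congr rfl fun v _ => hcard v
  have hgen : ∀ v, (((n v : ℚ)⁻¹ : ℚ) : QZ) ∈ σ.range := by
    intro v
    have hmem : (((n v : ℚ)⁻¹ : ℚ) : QZ) ∈ T v := by
      rw [hTv v]; exact mem_zmultiples _
    refine ⟨DirectSum.of (fun v => ↥(T v)) v ⟨_, hmem⟩, ?_⟩
    rw [hσ]
    rw [Fintype.sum_eq_single v (fun w hw => ?_)]
    · rw [DirectSum.of_eq_same]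
    · rw [DirectSum.of_eq_of_ne _ _ _ hw]
      rfl
  have hrange : σ.range = zmultiples ((((L : ℚ)⁻¹ : ℚ) : QZ)) := by
    apply le_antisymm
    · rintro _ ⟨x, rfl⟩
      rw [mem_tor hL0, hσ, Finset.smul_sum]
      refine Finset.sum_eq_zero fun v _ => ?_
      obtain ⟨k, hk⟩ := Finset.dvd_lcm (f := n) (Finset.mem_univ v)
      have hx : n v • ((x v : ↥(T v)) : QZ) = 0 := (hT v _).1 (x v).2
      rw [← hLdef] at hk
      rw [hk, mul_comm, mul_smul, hx, smul_zero]
    · rw [AddSubgroup.zmultiples_le]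
      exact inv_lcm_finset_mem σ.range Finset.univ n (fun v _ => hn v)
        (fun v _ => hgen v)
  have hq : Nat.card ((DirectSum S fun v => ↥(T v)) ⧸ σ.ker) = L := by
    rw [Nat.card_congr (QuotientAddGroup.quotientKerEquivRange σ).toEquiv, hrange]
    exact card_tor _ hL0
  have key := AddSubgroup.card_eq_card_quotient_mul_card_addSubgroup σ.ker
  rw [hq, hdom] at key
  refine ⟨Subtype.finite, ?_⟩
  rw [key, Nat.mul_div_cancel_left _ hL0]
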